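/- Let Ω ⊂ ℝ^n be open and bounded and let f : Ω × ℝ^N × ℝ^{Nn} → [0,∞) be such that x ↦ f(x,u,ξ) is Lebesgue integrable on Ω for every (u,ξ) ∈ ℝ^N × ℝ^{Nn} and (u,ξ) ↦ f(x,u,ξ) is convex for a.e. x ∈ Ω. Then there exists a measurable map g : Ω × [0,∞) → [0,∞) such that x ↦ g(x,M) is Lebesgue integrable on Ω for every M ≥ 0, and 0 ≤ f(x,u,ξ) ≤ g(x,M) holds for a.e. x ∈ Ω and all (u,ξ) ∈ ℝ^N × ℝ^{Nn} with max{|u|,|ξ|} ≤ M. -/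

import Mathlib

open Real MeasureTheory

private lemma abs_apply_le_norm {d : ℕ} (u : EuclideanSpace ℝ (Fin d)) (i : Fin d) :
    |u i| ≤ ‖u‖ := by
  rw [EuclideanSpace.norm_eq]
  rw [Real.le_sqrt (abs_nonneg _)]
  have : |u i| ^ 2 = ‖u i‖ ^ 2 := by rw [Real.norm_eq_abs]
  rw [this]
  · exact Finset.single_le_sum (fun j _ => sq_nonneg ‖u j‖) (Finset.mem_univ i)
  · exact Finset.sum_nonneg fun j _ => sq_nonneg _

private lemma mem_cube_hull {d : ℕ} (k : ℝ) (hk : 0 ≤ k) (u : EuclideanSpace ℝ (Fin d))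
    (h : ∀ i, |u i| ≤ k) :
    u ∈ convexHull ℝ
      (⇑(WithLp.linearEquiv 2 ℝ (∀ _ : Fin d, ℝ)).symm ''
        Set.pi Set.univ (fun _ : Fin d => ({-k, k} : Set ℝ))) := by
  have himg := ((WithLp.linearEquiv 2 ℝ (∀ _ : Fin d, ℝ)).symm.toLinearMap).image_convexHull
      (Set.pi Set.univ (fun _ : Fin d => ({-k, k} : Set ℝ)))
  rw [LinearEquiv.coe_coe] at himg
  rw [← himg]
  refine ⟨(WithLp.linearEquiv 2 ℝ (∀ _ : Fin d, ℝ)) u, ?_,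
    (WithLp.linearEquiv 2 ℝ _).symm_apply_apply u⟩
  rw [convexHull_pi]
  intro i _
  rw [convexHull_pair, segment_eq_Icc (by linarith : -k ≤ k)]
  exact abs_le.1 (h i)

/-- If `x ↦ f(x,u,ξ)` is integrable on the bounded open set `Ω` for every `(u,ξ)` and
`(u,ξ) ↦ f(x,u,ξ)` is convex for a.e. `x ∈ Ω`, then there is a measurable map
`g : Ω × [0,∞) → [0,∞)` with `x ↦ g(x,M)` integrable for every `M ≥ 0` and
`0 ≤ f(x,u,ξ) ≤ g(x,M)` for a.e. `x ∈ Ω` and all `(u,ξ)` with `max{|u|,|ξ|} ≤ M`. -/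
theorem mild_growth_property (n N : ℕ) (Ω : Set (EuclideanSpace ℝ (Fin n)))
    (hΩo : IsOpen Ω) (hΩb : Bornology.IsBounded Ω)
    (f : EuclideanSpace ℝ (Fin n) → EuclideanSpace ℝ (Fin N) →
      EuclideanSpace ℝ (Fin (N * n)) → ℝ)
    (hf0 : ∀ x u ξ, 0 ≤ f x u ξ)
    (hint : ∀ u ξ, IntegrableOn (fun x => f x u ξ) Ω volume)
    (hconv : ∀ᵐ x ∂(volume.restrict Ω),
      ConvexOn ℝ Set.univ
        (fun z : EuclideanSpace ℝ (Fin N) × EuclideanSpace ℝ (Fin (N * n)) =>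
          f x z.1 z.2)) :
    ∃ g : EuclideanSpace ℝ (Fin n) → ℝ → ℝ,
      Measurable (Function.uncurry g) ∧
      (∀ x M, 0 ≤ g x M) ∧
      (∀ M : ℝ, 0 ≤ M → IntegrableOn (fun x => g x M) Ω volume) ∧
      (∀ M : ℝ, 0 ≤ M → ∀ᵐ x ∂(volume.restrict Ω),
        ∀ u ξ, max ‖u‖ ‖ξ‖ ≤ M → f x u ξ ≤ g x M) := by
  classical
  -- vertices of cubes
  set V : ℕ → (Fin N → Bool) → EuclideanSpace ℝ (Fin N) :=
    fun k σ => WithLp.toLp 2 (fun i => if σ i then (k : ℝ) else -(k : ℝ)) with hV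
  set W : ℕ → (Fin (N * n) → Bool) → EuclideanSpace ℝ (Fin (N * n)) :=
    fun k τ => WithLp.toLp 2 (fun i => if τ i then (k : ℝ) else -(k : ℝ)) with hW
  set h : ℕ → EuclideanSpace ℝ (Fin n) → ℝ :=
    fun k x => ∑ σ : Fin N → Bool, ∑ τ : Fin (N * n) → Bool, f x (V k σ) (W k τ) with hh
  have hinth : ∀ k, IntegrableOn (h k) Ω volume := by
    intro k
    apply integrable_finset_sum
    intro σ _
    apply integrable_finset_sum
    intro τ _
    exact hint (V k σ) (W k τ)
  have hnn : ∀ k x, 0 ≤ h k x := fun k x =>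
    Finset.sum_nonneg fun σ _ => Finset.sum_nonneg fun τ _ => hf0 _ _ _
  -- measurable modifications
  set G : ℕ → EuclideanSpace ℝ (Fin n) → ℝ :=
    fun k => (hinth k).aestronglyMeasurable.mk (h k) with hG
  have hGmeas : ∀ k, Measurable (G k) := fun k =>
    ((hinth k).aestronglyMeasurable.stronglyMeasurable_mk).measurable
  have hGeq : ∀ k, h k =ᵐ[volume.restrict Ω] G k := fun k =>
    (hinth k).aestronglyMeasurable.ae_eq_mk
  refine ⟨fun x M => max 0 (G ⌈M⌉₊ x), ?_, ?_, ?_, ?_⟩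
  · -- measurability
    have hF : Measurable (fun p : EuclideanSpace ℝ (Fin n) × ℕ => max 0 (G p.2 p.1)) :=
      measurable_from_prod_countable_left fun k => measurable_const.max (hGmeas k)
    have : Function.uncurry (fun x M => max 0 (G ⌈M⌉₊ x)) =
        (fun p : EuclideanSpace ℝ (Fin n) × ℕ => max 0 (G p.2 p.1)) ∘
          (fun p : EuclideanSpace ℝ (Fin n) × ℝ => (p.1, ⌈p.2⌉₊)) := rfl
    rw [this]
    exact hF.comp (measurable_fst.prodMk (Nat.measurable_ceil.comp measurable_snd))
  · intro x M; exact le_max_left _ _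
  · -- integrability
    intro M _
    have hGi : IntegrableOn (G ⌈M⌉₊) Ω volume :=
      (hinth ⌈M⌉₊).congr (hGeq ⌈M⌉₊)
    have := hGi.pos_part
    have heq : (fun x => max 0 (G ⌈M⌉₊ x)) = fun x => max (G ⌈M⌉₊ x) 0 :=
      funext fun x => max_comm _ _
    rw [heq]
    exact this
  · -- the bound
    intro M hM
    set k := ⌈M⌉₊ with hk
    filter_upwards [hconv, hGeq k] with x hx hxG
    intro u ξ huξ
    have hMk : M ≤ (k : ℝ) := Nat.le_ceil M
    have hknn : (0 : ℝ) ≤ (k : ℝ) := Nat.cast_nonneg k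
    -- membership of (u, ξ) in the convex hull of the product of cubes
    set S₁ : Set (EuclideanSpace ℝ (Fin N)) :=
      ⇑(WithLp.linearEquiv 2 ℝ (∀ _ : Fin N, ℝ)).symm ''
        Set.pi Set.univ (fun _ : Fin N => ({-(k : ℝ), (k : ℝ)} : Set ℝ)) with hS₁
    set S₂ : Set (EuclideanSpace ℝ (Fin (N * n))) :=
      ⇑(WithLp.linearEquiv 2 ℝ (∀ _ : Fin (N * n), ℝ)).symm ''
        Set.pi Set.univ (fun _ : Fin (N * n) => ({-(k : ℝ), (k : ℝ)} : Set ℝ)) with hS₂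
    have hu : u ∈ convexHull ℝ S₁ := by
      apply mem_cube_hull _ hknn
      intro i
      exact (abs_apply_le_norm u i).trans (((le_max_left _ _).trans huξ).trans hMk)
    have hξ : ξ ∈ convexHull ℝ S₂ := by
      apply mem_cube_hull _ hknn
      intro i
      exact (abs_apply_le_norm ξ i).trans (((le_max_right _ _).trans huξ).trans hMk)
    have hmem : (u, ξ) ∈ convexHull ℝ (S₁ ×ˢ S₂) := by
      rw [convexHull_prod]; exact ⟨hu, hξ⟩
    obtain ⟨y, hyT, hle⟩ := hx.exists_ge_of_mem_convexHull (Set.subset_univ _) hmem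
    obtain ⟨hy1, hy2⟩ := hyT
    obtain ⟨w1, hw1, hw1e⟩ := hy1
    obtain ⟨w2, hw2, hw2e⟩ := hy2
    set σ : Fin N → Bool := fun i => decide (w1 i = (k : ℝ)) with hσ
    set τ : Fin (N * n) → Bool := fun i => decide (w2 i = (k : ℝ)) with hτ
    have hVσ : V k σ = y.1 := by
      rw [← hw1e]
      ext i
      have := hw1 i (Set.mem_univ i)
      simp only [Set.mem_insert_iff, Set.mem_singleton_iff] at this
      by_cases hc : w1 i = (k : ℝ)
      · simp [hV, hσ, hc]
      · have hw : w1 i = -(k : ℝ) := this.resolve_right hc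
        simp only [hV, hσ, hc, hw, decide_eq_true_eq]
        rw [if_neg (fun h2 => hc (hw.trans h2))]
        rw [WithLp.linearEquiv_symm_apply, PiLp.toLp_apply]; exact hw.symm
    have hWτ : W k τ = y.2 := by
      rw [← hw2e]
      ext i
      have := hw2 i (Set.mem_univ i)
      simp only [Set.mem_insert_iff, Set.mem_singleton_iff] at this
      by_cases hc : w2 i = (k : ℝ)
      · simp [hW, hτ, hc]
      · have hw : w2 i = -(k : ℝ) := this.resolve_right hc
        simp only [hW, hτ, hc, hw, decide_eq_true_eq]
        rw [if_neg (fun h2 => hc (hw.trans h2))]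
        rw [WithLp.linearEquiv_symm_apply, PiLp.toLp_apply]; exact hw.symm
    have hfy : f x y.1 y.2 ≤ h k x := by
      rw [← hVσ, ← hWτ, hh]
      calc f x (V k σ) (W k τ)
          ≤ ∑ τ' : Fin (N * n) → Bool, f x (V k σ) (W k τ') :=
            Finset.single_le_sum (fun τ' _ => hf0 _ _ _) (Finset.mem_univ τ)
        _ ≤ ∑ σ' : Fin N → Bool, ∑ τ' : Fin (N * n) → Bool, f x (V k σ') (W k τ') :=
            Finset.single_le_sum
              (f := fun σ' : Fin N → Bool => ∑ τ' : Fin (N * n) → Bool, f x (V k σ') (W k τ'))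
              (fun σ' _ => Finset.sum_nonneg fun τ' _ => hf0 _ _ _) (Finset.mem_univ σ)
    calc f x u ξ ≤ f x y.1 y.2 := hle
      _ ≤ h k x := hfy
      _ = G k x := hxG
      _ ≤ max 0 (G k x) := le_max_right _ _
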